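/- arXiv:1909.07222 — 2 statements merged into one kernel-verified Lean document; each statement's English description precedes it below -/
import Mathlib

section
/- K is a perfectoid field: the absolute value on K is nonarchimedean, K is complete, p is topologically nilpotent in K (i.e. |p| < 1), the image |K^×| of the absolute value is dense in ℝ_{>0}, and the p-th power map x ↦ x^p on O_K/pO_K is surjective, i.e. every element of O_K/pO_K admits a p-th root. -/
set_option linter.unusedSectionVars false
open Finset


section Aux
variable {K : Type} [NormedField K]

theorem aux_sum_le (na : ∀ x y : K, ‖x + y‖ ≤ max ‖x‖ ‖y‖)
    {ι : Type} (s : Finset ι) (f : ι → K) {B : ℝ} (hB : 0 ≤ B)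
    (h : ∀ i ∈ s, ‖f i‖ ≤ B) : ‖∑ i ∈ s, f i‖ ≤ B := by
  induction s using Finset.cons_induction with
  | empty => simpa using hB
  | cons a s ha ih =>
      rw [Finset.sum_cons]
      exact le_trans (na _ _)
        (max_le (h a (by simp)) (ih fun i hi => h i (by simp [hi])))

theorem aux_sum_lt (na : ∀ x y : K, ‖x + y‖ ≤ max ‖x‖ ‖y‖)
    {ι : Type} (s : Finset ι) (f : ι → K) {B : ℝ} (hB : 0 < B)
    (h : ∀ i ∈ s, ‖f i‖ < B) : ‖∑ i ∈ s, f i‖ < B := by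
  induction s using Finset.cons_induction with
  | empty => simpa using hB
  | cons a s ha ih =>
      rw [Finset.sum_cons]
      exact lt_of_le_of_lt (na _ _)
        (max_lt (h a (by simp)) (ih fun i hi => h i (by simp [hi])))

theorem aux_add_eq (na : ∀ x y : K, ‖x + y‖ ≤ max ‖x‖ ‖y‖)
    {x y : K} (h : ‖y‖ < ‖x‖) : ‖x + y‖ = ‖x‖ := by
  refine le_antisymm (le_trans (na _ _) (by rw [max_eq_left h.le])) ?_
  by_contra hlt
  push_neg at hlt
  have : ‖x‖ ≤ max ‖x + y‖ ‖y‖ := by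
    have := na (x + y) (-y)
    simpa using this
  rcases max_cases ‖x + y‖ ‖y‖ with ⟨he, _⟩ | ⟨he, _⟩ <;> rw [he] at this
  · exact absurd (lt_of_le_of_lt this hlt) (lt_irrefl _)
  · exact absurd (lt_of_le_of_lt this h) (lt_irrefl _)

variable {p : ℕ} [Fact p.Prime]

theorem aux_int_le_one (na : ∀ x y : K, ‖x + y‖ ≤ max ‖x‖ ‖y‖) (c : ℤ) :
    ‖(c : K)‖ ≤ 1 := by
  have hn : ∀ m : ℕ, ‖(m : K)‖ ≤ 1 := by
    intro m
    induction m with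
    | zero => simp
    | succ m ih =>
        push_cast
        exact le_trans (na _ _) (max_le ih (by simp))
  rcases Int.natAbs_eq c with h | h <;> rw [h]
  · rw [Int.cast_natCast]; exact hn _
  · rw [Int.cast_neg, norm_neg, Int.cast_natCast]; exact hn _

theorem aux_coprime_norm_one (na : ∀ x y : K, ‖x + y‖ ≤ max ‖x‖ ‖y‖)
    (hKp : ‖(p : K)‖ = (p : ℝ)⁻¹) {c : ℤ} (hc : ¬ (p : ℤ) ∣ c) :
    ‖(c : K)‖ = 1 := by
  have hp := (Fact.out : p.Prime)
  have hp1 : (1 : ℝ) < p := by exact_mod_cast hp.one_lt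
  have hcop : IsCoprime (p : ℤ) c :=
    (Int.prime_iff_natAbs_prime.mpr (by simpa using hp)).coprime_iff_not_dvd.mpr hc
  obtain ⟨a, b, hab⟩ := hcop
  refine le_antisymm (aux_int_le_one na c) ?_
  by_contra hlt
  push_neg at hlt
  have h1 : (1 : K) = (a : K) * (p : K) + (b : K) * (c : K) := by
    have := congrArg (fun z : ℤ => (z : K)) hab
    push_cast at this
    simpa using this.symm
  have : ‖(1 : K)‖ < 1 := by
    rw [h1]
    refine lt_of_le_of_lt (na _ _) (max_lt ?_ ?_)
    · rw [norm_mul, hKp]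
      calc ‖(a : K)‖ * (p : ℝ)⁻¹ ≤ 1 * (p : ℝ)⁻¹ := by
            apply mul_le_mul_of_nonneg_right (aux_int_le_one na a)
            positivity
        _ < 1 := by rw [one_mul]; exact inv_lt_one_of_one_lt₀ hp1
    · rw [norm_mul]
      calc ‖(b : K)‖ * ‖(c : K)‖ ≤ 1 * ‖(c : K)‖ :=
            mul_le_mul_of_nonneg_right (aux_int_le_one na b) (norm_nonneg _)
        _ < 1 := by rw [one_mul]; exact hlt
  simp at this

theorem aux_int_norm (na : ∀ x y : K, ‖x + y‖ ≤ max ‖x‖ ‖y‖)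
    (hKp : ‖(p : K)‖ = (p : ℝ)⁻¹) {c : ℤ} (hc : c ≠ 0) :
    ‖(c : K)‖ = ((p : ℝ)⁻¹) ^ padicValInt p c := by
  set v := padicValInt p c
  have hdvd : (p : ℤ) ^ v ∣ c := padicValInt_dvd c
  obtain ⟨c', hc'⟩ := hdvd
  have hndvd : ¬ (p : ℤ) ∣ c' := by
    intro ⟨d, hd⟩
    have : (p : ℤ) ^ (v + 1) ∣ c := ⟨d, by rw [hc', hd]; ring⟩
    rw [padicValInt_dvd_iff] at this
    rcases this with h | h
    · exact hc h
    · omega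
  rw [hc']
  push_cast
  rw [norm_mul, norm_pow, hKp, aux_coprime_norm_one na hKp hndvd, mul_one]

end Aux



section Aux2
variable {K : Type} [NormedField K] {p : ℕ} [Fact p.Prime]

theorem aux_r_pow (r : ℕ → K) (hr : ∀ n, r (n + 1) ^ p = r n) (m k : ℕ) :
    r (m + k) ^ (p ^ k) = r m := by
  induction k with
  | zero => simp
  | succ k ih =>
      rw [show m + (k + 1) = (m + k) + 1 by omega, pow_succ', pow_mul, hr (m + k), ih]

theorem aux_r_root (r : ℕ → K) (hr0 : r 0 = (p : K))
    (hr : ∀ n, r (n + 1) ^ p = r n) (n : ℕ) : r n ^ (p ^ n) = (p : K) := by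
  have := aux_r_pow r hr 0 n
  rw [Nat.zero_add] at this
  rw [this, hr0]

theorem aux_p_ne (hKp : ‖(p : K)‖ = (p : ℝ)⁻¹) : (p : K) ≠ 0 := by
  have hp := (Fact.out : p.Prime)
  intro h
  rw [h, norm_zero] at hKp
  have hppos : (0 : ℝ) < (p : ℝ) := by exact_mod_cast hp.pos
  have : (0 : ℝ) < (p : ℝ)⁻¹ := inv_pos.mpr hppos
  rw [← hKp] at this
  exact lt_irrefl _ this

theorem aux_r_ne (hKp : ‖(p : K)‖ = (p : ℝ)⁻¹) (r : ℕ → K) (hr0 : r 0 = (p : K))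
    (hr : ∀ n, r (n + 1) ^ p = r n) (n : ℕ) : r n ≠ 0 := by
  intro h
  have hNe : p ^ n ≠ 0 := (pow_pos (Fact.out : p.Prime).pos n).ne'
  apply aux_p_ne hKp
  rw [← aux_r_root r hr0 hr n, h, zero_pow hNe]

theorem aux_theta_pow (hKp : ‖(p : K)‖ = (p : ℝ)⁻¹) (r : ℕ → K) (hr0 : r 0 = (p : K))
    (hr : ∀ n, r (n + 1) ^ p = r n) (n : ℕ) : ‖r n‖ ^ (p ^ n) = (p : ℝ)⁻¹ := by
  rw [← norm_pow, aux_r_root r hr0 hr n, hKp]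

theorem aux_theta_pos (hKp : ‖(p : K)‖ = (p : ℝ)⁻¹) (r : ℕ → K) (hr0 : r 0 = (p : K))
    (hr : ∀ n, r (n + 1) ^ p = r n) (n : ℕ) : 0 < ‖r n‖ :=
  norm_pos_iff.mpr (aux_r_ne hKp r hr0 hr n)

theorem aux_theta_lt_one (hKp : ‖(p : K)‖ = (p : ℝ)⁻¹) (r : ℕ → K) (hr0 : r 0 = (p : K))
    (hr : ∀ n, r (n + 1) ^ p = r n) (n : ℕ) : ‖r n‖ < 1 := by
  have hp := (Fact.out : p.Prime)
  have h1 : ‖r n‖ ^ (p ^ n) < 1 := by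
    rw [aux_theta_pow hKp r hr0 hr n]
    apply inv_lt_one_of_one_lt₀
    exact_mod_cast hp.one_lt
  by_contra hle
  push_neg at hle
  exact absurd (one_le_pow₀ hle) (not_le.mpr h1)

theorem aux_theta_le_one (hKp : ‖(p : K)‖ = (p : ℝ)⁻¹) (r : ℕ → K) (hr0 : r 0 = (p : K))
    (hr : ∀ n, r (n + 1) ^ p = r n) (n : ℕ) : ‖r n‖ ≤ 1 :=
  (aux_theta_lt_one hKp r hr0 hr n).le

end Aux2

/-- canonical-form set: integer polynomials in `r n` of degree `< p^n`. -/
def MSet {K : Type} [NormedField K] (p : ℕ) (r : ℕ → K) (n : ℕ) : Set K :=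
  {x | ∃ c : ℕ → ℤ, x = ∑ k ∈ Finset.range (p ^ n), (c k : K) * r n ^ k}

section Aux3
variable {K : Type} [NormedField K] {p : ℕ} [Fact p.Prime] (r : ℕ → K)
  (hr0 : r 0 = (p : K)) (hr : ∀ n, r (n + 1) ^ p = r n)

theorem MSet.zero_mem (n : ℕ) : (0 : K) ∈ MSet p r n :=
  ⟨fun _ => 0, by simp⟩

theorem MSet.add_mem {n : ℕ} {x y : K} (hx : x ∈ MSet p r n) (hy : y ∈ MSet p r n) :
    x + y ∈ MSet p r n := by
  obtain ⟨c, hc⟩ := hx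
  obtain ⟨d, hd⟩ := hy
  exact ⟨fun k => c k + d k, by rw [hc, hd, ← Finset.sum_add_distrib]; exact Finset.sum_congr rfl fun k _ => by push_cast; ring⟩

theorem MSet.neg_mem {n : ℕ} {x : K} (hx : x ∈ MSet p r n) : -x ∈ MSet p r n := by
  obtain ⟨c, hc⟩ := hx
  exact ⟨fun k => -(c k), by rw [hc, ← Finset.sum_neg_distrib]; exact Finset.sum_congr rfl fun k _ => by push_cast; ring⟩

include hr0 hr in
theorem MSet.monomial_mem (n : ℕ) (c : ℤ) (e : ℕ) : (c : K) * r n ^ e ∈ MSet p r n := by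
  have hp := (Fact.out : p.Prime)
  have hN : 0 < p ^ n := pow_pos hp.pos n
  set N := p ^ n with hNdef
  have hmod : N * (e / N) + e % N = e := Nat.div_add_mod e N
  have hsN : e % N < N := Nat.mod_lt e hN
  have hre : r n ^ e = ((p : K)) ^ (e / N) * r n ^ (e % N) := by
    conv_lhs => rw [← hmod]
    rw [pow_add, pow_mul, aux_r_root r hr0 hr n]
  refine ⟨fun k => if k = e % N then c * (p : ℤ) ^ (e / N) else 0, ?_⟩
  rw [hre]
  rw [Finset.sum_congr rfl (fun k _ => by
    rw [show (((if k = e % N then c * (p : ℤ) ^ (e / N) else 0) : ℤ) : K)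
      = if k = e % N then ((c * (p : ℤ) ^ (e / N) : ℤ) : K) else 0 by split <;> simp])]
  simp only [ite_mul, zero_mul]
  rw [Finset.sum_ite_eq' (Finset.range N) (e % N)]
  simp only [Finset.mem_range, hsN, if_true]
  push_cast
  ring

theorem MSet.sum_mem {ι : Type} (s : Finset ι) (f : ι → K) {n : ℕ}
    (h : ∀ i ∈ s, f i ∈ MSet p r n) : (∑ i ∈ s, f i) ∈ MSet p r n := by
  induction s using Finset.cons_induction with
  | empty => simpa using MSet.zero_mem r n
  | cons a s ha ih =>
      rw [Finset.sum_cons]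
      exact MSet.add_mem r (h a (by simp)) (ih fun i hi => h i (by simp [hi]))

include hr0 hr in
theorem MSet.mul_mem {n : ℕ} {x y : K} (hx : x ∈ MSet p r n) (hy : y ∈ MSet p r n) :
    x * y ∈ MSet p r n := by
  obtain ⟨c, hc⟩ := hx
  obtain ⟨d, hd⟩ := hy
  rw [hc, hd, Finset.sum_mul_sum]
  refine MSet.sum_mem r _ _ fun k _ => MSet.sum_mem r _ _ fun j _ => ?_
  have : (c k : K) * r n ^ k * ((d j : K) * r n ^ j)
      = ((c k * d j : ℤ) : K) * r n ^ (k + j) := by push_cast; ring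
  rw [this]
  exact MSet.monomial_mem r hr0 hr n _ _

include hr0 hr in
theorem MSet.one_mem (n : ℕ) : (1 : K) ∈ MSet p r n := by
  have := MSet.monomial_mem r hr0 hr n 1 0
  simpa using this

include hr0 hr in
theorem MSet.intCast_mem (n : ℕ) (c : ℤ) : (c : K) ∈ MSet p r n := by
  have := MSet.monomial_mem r hr0 hr n c 0
  simpa using this

include hr0 hr in
theorem MSet.mono {n m : ℕ} (hnm : n ≤ m) : MSet p r n ⊆ MSet p r m := by
  intro x hx
  obtain ⟨c, hc⟩ := hx
  rw [hc]
  refine MSet.sum_mem r _ _ fun k _ => ?_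
  have hrm : r n = r m ^ (p ^ (m - n)) := by
    have := aux_r_pow r hr n (m - n)
    rw [show n + (m - n) = m by omega] at this
    exact this.symm
  rw [hrm, ← pow_mul]
  exact MSet.monomial_mem r hr0 hr m _ _

end Aux3

section Aux4
variable {K : Type} [NormedField K] {p : ℕ} [Fact p.Prime]

theorem aux_q_pos : (0 : ℝ) < (p : ℝ)⁻¹ := by
  have hp := (Fact.out : p.Prime)
  have : (0 : ℝ) < (p : ℝ) := by exact_mod_cast hp.pos
  exact inv_pos.mpr this

theorem aux_q_lt_one : ((p : ℝ)⁻¹) < 1 := by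
  have hp := (Fact.out : p.Prime)
  exact inv_lt_one_of_one_lt₀ (by exact_mod_cast hp.one_lt)

theorem aux_q_le (A B : ℕ) (h : B ≤ A) : ((p : ℝ)⁻¹) ^ A ≤ ((p : ℝ)⁻¹) ^ B := by
  by_contra hlt
  push_neg at hlt
  have := (pow_lt_pow_iff_right_of_lt_one₀ (aux_q_pos (p := p))
    (aux_q_lt_one (p := p))).mp hlt
  omega

theorem aux_q_lt (A B : ℕ) (h : B < A) : ((p : ℝ)⁻¹) ^ A < ((p : ℝ)⁻¹) ^ B :=
  (pow_lt_pow_iff_right_of_lt_one₀ (aux_q_pos (p := p)) (aux_q_lt_one (p := p))).mpr h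

theorem aux_int_norm_pos (na : ∀ x y : K, ‖x + y‖ ≤ max ‖x‖ ‖y‖)
    (hKp : ‖(p : K)‖ = (p : ℝ)⁻¹) {c : ℤ} (hc : c ≠ 0) : 0 < ‖(c : K)‖ := by
  rw [aux_int_norm na hKp hc]
  exact pow_pos (aux_q_pos (p := p)) _

/-- N-th power of the norm of a monomial. -/
theorem aux_pow_N_eq (na : ∀ x y : K, ‖x + y‖ ≤ max ‖x‖ ‖y‖)
    (hKp : ‖(p : K)‖ = (p : ℝ)⁻¹) (r : ℕ → K) (hr0 : r 0 = (p : K))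
    (hr : ∀ n, r (n + 1) ^ p = r n) {n : ℕ} {c : ℤ} (hc : c ≠ 0) (k : ℕ) :
    ‖(c : K) * r n ^ k‖ ^ (p ^ n)
      = ((p : ℝ)⁻¹) ^ (padicValInt p c * p ^ n + k) := by
  have h1 : (‖r n‖ ^ k) ^ (p ^ n) = ((p : ℝ)⁻¹) ^ k := by
    rw [← pow_mul, mul_comm, pow_mul, aux_theta_pow hKp r hr0 hr]
  rw [norm_mul, norm_pow, mul_pow, aux_int_norm na hKp hc, h1, ← pow_mul, ← pow_add]

theorem aux_mu_le_mu (na : ∀ x y : K, ‖x + y‖ ≤ max ‖x‖ ‖y‖)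
    (hKp : ‖(p : K)‖ = (p : ℝ)⁻¹) (r : ℕ → K) (hr0 : r 0 = (p : K))
    (hr : ∀ n, r (n + 1) ^ p = r n) {n : ℕ} {c d : ℤ} (hc : c ≠ 0) (hd : d ≠ 0)
    {k j : ℕ}
    (h : padicValInt p d * p ^ n + j ≤ padicValInt p c * p ^ n + k) :
    ‖(c : K) * r n ^ k‖ ≤ ‖(d : K) * r n ^ j‖ := by
  have hN : p ^ n ≠ 0 := (pow_pos (Fact.out : p.Prime).pos n).ne'
  refine le_of_pow_le_pow_left₀ hN (norm_nonneg _) ?_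
  rw [aux_pow_N_eq na hKp r hr0 hr hc, aux_pow_N_eq na hKp r hr0 hr hd]
  exact aux_q_le _ _ h

theorem aux_mu_lt_mu (na : ∀ x y : K, ‖x + y‖ ≤ max ‖x‖ ‖y‖)
    (hKp : ‖(p : K)‖ = (p : ℝ)⁻¹) (r : ℕ → K) (hr0 : r 0 = (p : K))
    (hr : ∀ n, r (n + 1) ^ p = r n) {n : ℕ} {c d : ℤ} (hc : c ≠ 0) (hd : d ≠ 0)
    {k j : ℕ}
    (h : padicValInt p d * p ^ n + j < padicValInt p c * p ^ n + k) :
    ‖(c : K) * r n ^ k‖ < ‖(d : K) * r n ^ j‖ := by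
  refine lt_of_pow_lt_pow_left₀ (p ^ n) (norm_nonneg _) ?_
  rw [aux_pow_N_eq na hKp r hr0 hr hc, aux_pow_N_eq na hKp r hr0 hr hd]
  exact aux_q_lt _ _ h

/-- Converts a norm bound into an exponent bound. -/
theorem aux_norm_to_E (na : ∀ x y : K, ‖x + y‖ ≤ max ‖x‖ ‖y‖)
    (hKp : ‖(p : K)‖ = (p : ℝ)⁻¹) (r : ℕ → K) (hr0 : r 0 = (p : K))
    (hr : ∀ n, r (n + 1) ^ p = r n) {n : ℕ} {c : ℤ} (hc : c ≠ 0) {k k0 v0 : ℕ}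
    (h : ‖(c : K) * r n ^ k‖ ≤ ((p : ℝ)⁻¹) ^ v0 * ‖r n‖ ^ k0) :
    v0 * p ^ n + k0 ≤ padicValInt p c * p ^ n + k := by
  have hN : p ^ n ≠ 0 := (pow_pos (Fact.out : p.Prime).pos n).ne'
  have hRHS : (((p : ℝ)⁻¹) ^ v0 * ‖r n‖ ^ k0) ^ (p ^ n)
      = ((p : ℝ)⁻¹) ^ (v0 * p ^ n + k0) := by
    have h1 : (‖r n‖ ^ k0) ^ (p ^ n) = ((p : ℝ)⁻¹) ^ k0 := by
      rw [← pow_mul, mul_comm, pow_mul, aux_theta_pow hKp r hr0 hr]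
    rw [mul_pow, h1, ← pow_mul, ← pow_add]
  have hple := pow_le_pow_left₀ (norm_nonneg _) h (p ^ n)
  rw [aux_pow_N_eq na hKp r hr0 hr hc, hRHS] at hple
  by_contra hlt
  push_neg at hlt
  exact absurd (lt_of_le_of_lt hple (aux_q_lt _ _ hlt)) (lt_irrefl _)

theorem aux_exp_ineq1 {v v0 N k k0 : ℕ} (hE : v0 * N + k0 ≤ v * N + k) (hk : k < N) :
    v0 ≤ v := by
  by_contra h
  push_neg at h
  have h2 : (v + 1) * N ≤ v0 * N := Nat.mul_le_mul_right N h
  rw [add_mul, one_mul] at h2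
  linarith

theorem aux_exp_ineq2 {v v0 N k k0 : ℕ} (hE : v0 * N + k0 ≤ v * N + k) (hkk : k < k0) :
    v0 + 1 ≤ v := by
  by_contra h
  push_neg at h
  have h2 : v * N ≤ v0 * N := Nat.mul_le_mul_right N (by omega)
  linarith

end Aux4

section Aux5
variable {K : Type} [NormedField K] {p : ℕ} [Fact p.Prime]

theorem aux_dominant (na : ∀ x y : K, ‖x + y‖ ≤ max ‖x‖ ‖y‖)
    (hKp : ‖(p : K)‖ = (p : ℝ)⁻¹) (r : ℕ → K) (hr0 : r 0 = (p : K))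
    (hr : ∀ n, r (n + 1) ^ p = r n) {n : ℕ} (c : ℕ → ℤ)
    (hne : ∃ k ∈ Finset.range (p ^ n), c k ≠ 0) :
    ∃ k0 ∈ Finset.range (p ^ n), c k0 ≠ 0 ∧
      ‖∑ k ∈ Finset.range (p ^ n), (c k : K) * r n ^ k‖ = ‖(c k0 : K) * r n ^ k0‖ ∧
      ∀ k ∈ Finset.range (p ^ n),
        ‖(c k : K) * r n ^ k‖ ≤ ‖(c k0 : K) * r n ^ k0‖ := by
  classical
  set N := p ^ n with hN
  set s := (Finset.range N).filter (fun k => c k ≠ 0) with hs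
  have hsne : s.Nonempty := by
    obtain ⟨k, hk, hck⟩ := hne
    exact ⟨k, by simp [hs, hk, hck]⟩
  set E := fun k => padicValInt p (c k) * N + k with hE
  obtain ⟨k0, hk0s, hk0min⟩ := Finset.exists_min_image s E hsne
  have hk0r : k0 ∈ Finset.range N := (Finset.mem_filter.mp hk0s).1
  have hck0 : c k0 ≠ 0 := (Finset.mem_filter.mp hk0s).2
  have hEinj : ∀ k ∈ s, k ≠ k0 → E k0 < E k := by
    intro k hks hkne
    refine lt_of_le_of_ne (hk0min k hks) fun hEeq => hkne ?_
    have h1 : E k0 % N = k0 := by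
      rw [hE]; simp only []
      rw [add_comm, Nat.add_mul_mod_self_right, Nat.mod_eq_of_lt (Finset.mem_range.mp hk0r)]
    have h2 : E k % N = k := by
      rw [hE]; simp only []
      rw [add_comm, Nat.add_mul_mod_self_right,
        Nat.mod_eq_of_lt (Finset.mem_range.mp (Finset.mem_filter.mp hks).1)]
    rw [← h2, ← hEeq, h1]
  have hck0K : ((c k0 : K)) ≠ 0 :=
    norm_pos_iff.mp (aux_int_norm_pos na hKp hck0)
  have hmupos : 0 < ‖(c k0 : K) * r n ^ k0‖ :=
    norm_pos_iff.mpr (mul_ne_zero hck0K (pow_ne_zero _ (aux_r_ne hKp r hr0 hr n)))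
  have hrest : ‖∑ k ∈ (Finset.range N).erase k0, (c k : K) * r n ^ k‖
      < ‖(c k0 : K) * r n ^ k0‖ := by
    refine aux_sum_lt na _ _ hmupos fun k hk => ?_
    have hkr : k ∈ Finset.range N := Finset.mem_of_mem_erase hk
    have hkne : k ≠ k0 := Finset.ne_of_mem_erase hk
    by_cases hck : c k = 0
    · simpa [hck] using hmupos
    · exact aux_mu_lt_mu na hKp r hr0 hr hck hck0
        (hEinj k (by simp [hs, hkr, hck]) hkne)
  have hsplit : (∑ k ∈ Finset.range N, (c k : K) * r n ^ k)
      = (c k0 : K) * r n ^ k0 + ∑ k ∈ (Finset.range N).erase k0, (c k : K) * r n ^ k :=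
    (Finset.add_sum_erase _ _ hk0r).symm
  have hnorm : ‖∑ k ∈ Finset.range N, (c k : K) * r n ^ k‖ = ‖(c k0 : K) * r n ^ k0‖ := by
    rw [hsplit]; exact aux_add_eq na hrest
  refine ⟨k0, hk0r, hck0, hnorm, fun k hk => ?_⟩
  by_cases hck : c k = 0
  · simp [hck]; positivity
  · by_cases hkne : k = k0
    · subst hkne; exact le_rfl
    · exact (aux_mu_lt_mu na hKp r hr0 hr hck hck0
        (hEinj k (by simp [hs, Finset.mem_range.mp hk, hck]) hkne)).le

theorem aux_extract (na : ∀ x y : K, ‖x + y‖ ≤ max ‖x‖ ‖y‖)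
    (hKp : ‖(p : K)‖ = (p : ℝ)⁻¹) (r : ℕ → K) (hr0 : r 0 = (p : K))
    (hr : ∀ n, r (n + 1) ^ p = r n) {n k0 v0 : ℕ} (hk0 : k0 < p ^ n) (c : ℕ → ℤ)
    (hbound : ∀ k ∈ Finset.range (p ^ n),
      ‖(c k : K) * r n ^ k‖ ≤ ((p : ℝ)⁻¹) ^ v0 * ‖r n‖ ^ k0) :
    ∃ X ∈ MSet p r n, (∑ k ∈ Finset.range (p ^ n), (c k : K) * r n ^ k)
      = ((p : K) ^ v0 * r n ^ k0) * X := by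
  classical
  have hp := (Fact.out : p.Prime)
  have hpZ : ((p : ℤ)) ≠ 0 := by exact_mod_cast hp.ne_zero
  set N := p ^ n with hNdef
  refine ⟨∑ k ∈ Finset.range N, (if k0 ≤ k
      then ((c k / (p : ℤ) ^ v0 : ℤ) : K) * r n ^ (k - k0)
      else ((c k / (p : ℤ) ^ (v0 + 1) : ℤ) : K) * r n ^ (k + N - k0)), ?_, ?_⟩
  · refine MSet.sum_mem r _ _ fun k hk => ?_
    split <;> exact MSet.monomial_mem r hr0 hr n _ _
  · rw [Finset.mul_sum]
    refine Finset.sum_congr rfl fun k hk => ?_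
    have hkN : k < N := Finset.mem_range.mp hk
    by_cases hck : c k = 0
    · simp [hck]
    · have hEb := aux_norm_to_E na hKp r hr0 hr hck (hbound k hk)
      split
      next h =>
        have hdvd : (p : ℤ) ^ v0 ∣ c k :=
          (padicValInt_dvd_iff v0 (c k)).mpr (Or.inr (aux_exp_ineq1 hEb hkN))
        obtain ⟨e, he⟩ := hdvd
        have hq : c k / (p : ℤ) ^ v0 = e := by
          rw [he]; exact Int.mul_ediv_cancel_left _ (pow_ne_zero _ hpZ)
        have hke : k0 + (k - k0) = k := by omega
        have hcalc : (p : K) ^ v0 * r n ^ k0 * ((e : K) * r n ^ (k - k0))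
            = (((p : ℤ) ^ v0 * e : ℤ) : K) * r n ^ k := by
          calc (p : K) ^ v0 * r n ^ k0 * ((e : K) * r n ^ (k - k0))
              = (e : K) * (p : K) ^ v0 * r n ^ (k0 + (k - k0)) := by
                rw [pow_add]; ring
            _ = (((p : ℤ) ^ v0 * e : ℤ) : K) * r n ^ k := by
                rw [hke]; push_cast; ring
        rw [hq, hcalc, ← he]
      next h =>
        have hdvd : (p : ℤ) ^ (v0 + 1) ∣ c k :=
          (padicValInt_dvd_iff (v0 + 1) (c k)).mpr
            (Or.inr (aux_exp_ineq2 hEb (by omega)))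
        obtain ⟨e, he⟩ := hdvd
        have hq : c k / (p : ℤ) ^ (v0 + 1) = e := by
          rw [he]; exact Int.mul_ediv_cancel_left _ (pow_ne_zero _ hpZ)
        have hke : k0 + (k + N - k0) = k + N := by omega
        have hrN : r n ^ (k + N) = r n ^ k * (p : K) := by
          rw [pow_add, aux_r_root r hr0 hr n]
        rw [hq, he]
        symm
        calc (p : K) ^ v0 * r n ^ k0 * ((e : K) * r n ^ (k + N - k0))
            = (e : K) * (p : K) ^ v0 * r n ^ (k0 + (k + N - k0)) := by
              rw [pow_add]; ring
          _ = (e : K) * (p : K) ^ v0 * (r n ^ k * (p : K)) := by rw [hke, hrN]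
          _ = ((((p : ℤ) ^ (v0 + 1) * e : ℤ)) : K) * r n ^ k := by
              push_cast; ring
end Aux5

/-- The union of all the canonical-form sets, as a subring. -/
def USubring {K : Type} [NormedField K] (p : ℕ) [Fact p.Prime] (r : ℕ → K)
    (hr0 : r 0 = (p : K)) (hr : ∀ n, r (n + 1) ^ p = r n) : Subring K where
  carrier := ⋃ n, MSet p r n
  zero_mem' := Set.mem_iUnion.mpr ⟨0, MSet.zero_mem r 0⟩
  one_mem' := Set.mem_iUnion.mpr ⟨0, MSet.one_mem r hr0 hr 0⟩
  add_mem' := by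
    intro a b ha hb
    obtain ⟨n, hn⟩ := Set.mem_iUnion.mp ha
    obtain ⟨m, hm⟩ := Set.mem_iUnion.mp hb
    exact Set.mem_iUnion.mpr ⟨max n m,
      MSet.add_mem r (MSet.mono r hr0 hr (le_max_left n m) hn)
        (MSet.mono r hr0 hr (le_max_right n m) hm)⟩
  neg_mem' := by
    intro a ha
    obtain ⟨n, hn⟩ := Set.mem_iUnion.mp ha
    exact Set.mem_iUnion.mpr ⟨n, MSet.neg_mem r hn⟩
  mul_mem' := by
    intro a b ha hb
    obtain ⟨n, hn⟩ := Set.mem_iUnion.mp ha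
    obtain ⟨m, hm⟩ := Set.mem_iUnion.mp hb
    exact Set.mem_iUnion.mpr ⟨max n m,
      MSet.mul_mem r hr0 hr (MSet.mono r hr0 hr (le_max_left n m) hn)
        (MSet.mono r hr0 hr (le_max_right n m) hm)⟩

section Aux6
variable {K : Type} [NormedField K] {p : ℕ} [Fact p.Prime]

theorem aux_mem_A_of_approx (r : ℕ → K) (hr0 : r 0 = (p : K))
    (hr : ∀ n, r (n + 1) ^ p = r n) {x : K}
    (h : ∀ ε : ℝ, 0 < ε → ∃ b ∈ (USubring p r hr0 hr).topologicalClosure,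
      ‖x - b‖ < ε) :
    x ∈ (USubring p r hr0 hr).topologicalClosure := by
  have hset : ((USubring p r hr0 hr).topologicalClosure : Set K)
      = closure ((USubring p r hr0 hr : Set K)) := rfl
  have : x ∈ closure ((USubring p r hr0 hr).topologicalClosure : Set K) := by
    refine Metric.mem_closure_iff.mpr fun ε hε => ?_
    obtain ⟨b, hb, hxb⟩ := h ε hε
    exact ⟨b, hb, by rwa [dist_eq_norm]⟩
  rw [hset, closure_closure] at this
  exact this

theorem aux_int_inv_mem (na : ∀ x y : K, ‖x + y‖ ≤ max ‖x‖ ‖y‖)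
    (hKp : ‖(p : K)‖ = (p : ℝ)⁻¹) (r : ℕ → K) (hr0 : r 0 = (p : K))
    (hr : ∀ n, r (n + 1) ^ p = r n) {c : ℤ} (hc : ¬ (p : ℤ) ∣ c) :
    ((c : K))⁻¹ ∈ (USubring p r hr0 hr).topologicalClosure := by
  have hp := (Fact.out : p.Prime)
  have hcn : ‖(c : K)‖ = 1 := aux_coprime_norm_one na hKp hc
  have hcK : (c : K) ≠ 0 := by
    intro h; rw [h, norm_zero] at hcn; norm_num at hcn
  refine aux_mem_A_of_approx r hr0 hr fun ε hε => ?_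
  obtain ⟨j, hj⟩ := exists_pow_lt_of_lt_one hε (aux_q_lt_one (p := p))
  have hcop : IsCoprime ((p : ℤ) ^ j) c :=
    ((Int.prime_iff_natAbs_prime.mpr (by simpa using hp)).coprime_iff_not_dvd.mpr
      hc).pow_left
  obtain ⟨u, v, huv⟩ := hcop
  refine ⟨(v : K), (USubring p r hr0 hr).le_topologicalClosure
    (Set.mem_iUnion.mpr ⟨0, MSet.intCast_mem r hr0 hr 0 v⟩), ?_⟩
  have hrewrite : (c : K)⁻¹ - (v : K) = (c : K)⁻¹ * ((u : K) * ((p : K)) ^ j) := by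
    field_simp
    have : ((1 : ℤ) : K) = ((u * (p : ℤ) ^ j + v * c : ℤ) : K) := by rw [huv]
    push_cast at this
    linear_combination this
  rw [hrewrite, norm_mul, norm_mul, norm_inv, hcn, inv_one, one_mul, norm_pow, hKp]
  calc ‖(u : K)‖ * ((p : ℝ)⁻¹) ^ j ≤ 1 * ((p : ℝ)⁻¹) ^ j := by
        apply mul_le_mul_of_nonneg_right (aux_int_le_one na u)
        positivity
    _ < ε := by rw [one_mul]; exact hj

theorem aux_geom_inv (na : ∀ x y : K, ‖x + y‖ ≤ max ‖x‖ ‖y‖)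
    (hKp : ‖(p : K)‖ = (p : ℝ)⁻¹) (r : ℕ → K) (hr0 : r 0 = (p : K))
    (hr : ∀ n, r (n + 1) ^ p = r n) {z : K} (hz : ‖z‖ < 1)
    (hzA : z ∈ (USubring p r hr0 hr).topologicalClosure) :
    (1 - z)⁻¹ ∈ (USubring p r hr0 hr).topologicalClosure := by
  have honez : ‖1 - z‖ = 1 := by
    have : ‖(1 : K) + (-z)‖ = ‖(1 : K)‖ := aux_add_eq na (by simpa using hz)
    simpa [sub_eq_add_neg] using this
  have hne : (1 : K) - z ≠ 0 := by
    intro h; rw [h, norm_zero] at honez; norm_num at honez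
  refine aux_mem_A_of_approx r hr0 hr fun ε hε => ?_
  obtain ⟨m, hm⟩ := exists_pow_lt_of_lt_one hε (lt_of_le_of_lt (le_refl ‖z‖) hz)
  refine ⟨∑ j ∈ Finset.range m, z ^ j, Subring.sum_mem _ fun j _ =>
    Subring.pow_mem _ hzA j, ?_⟩
  have hgeom : (∑ j ∈ Finset.range m, z ^ j) * (1 - z) = 1 - z ^ m := by
    have := geom_sum_mul z m
    calc (∑ j ∈ Finset.range m, z ^ j) * (1 - z)
        = -((∑ j ∈ Finset.range m, z ^ j) * (z - 1)) := by ring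
      _ = -(z ^ m - 1) := by rw [this]
      _ = 1 - z ^ m := by ring
  have hinvc : ((1 : K) - z) * (1 - z)⁻¹ = 1 := mul_inv_cancel₀ hne
  have hdiff : (1 - z)⁻¹ - ∑ j ∈ Finset.range m, z ^ j = (1 - z)⁻¹ * z ^ m := by
    linear_combination (∑ j ∈ Finset.range m, z ^ j) * hinvc - (1 - z)⁻¹ * hgeom
  rw [hdiff, norm_mul, norm_inv, honez, inv_one, one_mul, norm_pow]
  exact hm

theorem aux_unit_inv (na : ∀ x y : K, ‖x + y‖ ≤ max ‖x‖ ‖y‖)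
    (hKp : ‖(p : K)‖ = (p : ℝ)⁻¹) (r : ℕ → K) (hr0 : r 0 = (p : K))
    (hr : ∀ n, r (n + 1) ^ p = r n) {n : ℕ} {H : K} (hH : H ∈ MSet p r n)
    (hHnorm : ‖H‖ = 1) :
    H⁻¹ ∈ (USubring p r hr0 hr).topologicalClosure := by
  have hp := (Fact.out : p.Prime)
  have hθlt := aux_theta_lt_one hKp r hr0 hr n
  have hθpos := aux_theta_pos hKp r hr0 hr n
  have hθle := hθlt.le
  obtain ⟨c, hc⟩ := hH
  have hNpos : 0 < p ^ n := pow_pos hp.pos n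
  have h0mem : (0 : ℕ) ∈ Finset.range (p ^ n) := Finset.mem_range.mpr hNpos
  set R := ∑ k ∈ (Finset.range (p ^ n)).erase 0, (c k : K) * r n ^ k with hR
  have hsplit : H = (c 0 : K) + R := by
    rw [hc, hR, ← Finset.add_sum_erase _ _ h0mem, pow_zero, mul_one]
  have hRle : ‖R‖ ≤ ‖r n‖ := by
    refine aux_sum_le na _ _ hθpos.le fun k hk => ?_
    have hk1 : 1 ≤ k := by
      have := Finset.ne_of_mem_erase hk; omega
    rw [norm_mul, norm_pow]
    calc ‖(c k : K)‖ * ‖r n‖ ^ k ≤ 1 * ‖r n‖ ^ k := by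
          apply mul_le_mul_of_nonneg_right (aux_int_le_one na (c k))
          positivity
      _ ≤ ‖r n‖ := by
          rw [one_mul]
          calc ‖r n‖ ^ k ≤ ‖r n‖ ^ 1 := pow_le_pow_of_le_one hθpos.le hθle hk1
            _ = ‖r n‖ := pow_one _
  have hc0norm : ‖(c 0 : K)‖ = 1 := by
    refine le_antisymm (aux_int_le_one na _) ?_
    by_contra hlt
    push_neg at hlt
    have : ‖H‖ < 1 := by
      rw [hsplit]
      exact lt_of_le_of_lt (na _ _) (max_lt hlt (lt_of_le_of_lt hRle hθlt))
    rw [hHnorm] at this; norm_num at this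
  have hc0K : ((c 0 : ℤ) : K) ≠ 0 := by
    intro h; rw [h, norm_zero] at hc0norm; norm_num at hc0norm
  have hc0ndvd : ¬ (p : ℤ) ∣ c 0 := by
    rintro ⟨d, hd⟩
    have : ‖(c 0 : K)‖ ≤ (p : ℝ)⁻¹ := by
      rw [hd]
      push_cast
      rw [norm_mul, hKp]
      calc (p : ℝ)⁻¹ * ‖(d : K)‖ ≤ (p : ℝ)⁻¹ * 1 :=
            mul_le_mul_of_nonneg_left (aux_int_le_one na d) (aux_q_pos (p := p)).le
        _ = (p : ℝ)⁻¹ := mul_one _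
    rw [hc0norm] at this
    exact absurd (lt_of_le_of_lt this (aux_q_lt_one (p := p))) (lt_irrefl _)
  have hHne : H ≠ 0 := by
    intro h; rw [h, norm_zero] at hHnorm; norm_num at hHnorm
  set z := 1 - H * ((c 0 : ℤ) : K)⁻¹ with hzdef
  have hznorm : ‖z‖ < 1 := by
    have hzeq : z = -R * ((c 0 : ℤ) : K)⁻¹ := by
      rw [hzdef, hsplit]; field_simp; ring
    rw [hzeq, norm_mul, norm_neg, norm_inv, hc0norm, inv_one, mul_one]
    exact lt_of_le_of_lt hRle hθlt
  have hzA : z ∈ (USubring p r hr0 hr).topologicalClosure := by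
    refine Subring.sub_mem _ (Subring.one_mem _) (Subring.mul_mem _ ?_ ?_)
    · exact (USubring p r hr0 hr).le_topologicalClosure
        (Set.mem_iUnion.mpr ⟨n, ⟨c, hc⟩⟩)
    · exact aux_int_inv_mem na hKp r hr0 hr hc0ndvd
  have hinv : H⁻¹ = ((c 0 : ℤ) : K)⁻¹ * (1 - z)⁻¹ := by
    rw [hzdef]
    field_simp
    rw [sub_sub_cancel, div_self hHne]
  rw [hinv]
  exact Subring.mul_mem _ (aux_int_inv_mem na hKp r hr0 hr hc0ndvd)
    (aux_geom_inv na hKp r hr0 hr hznorm hzA)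

end Aux6

theorem aux_sum_pow_p {R : Type} [CommRing R] {p : ℕ} (hp : p.Prime) {ι : Type}
    (s : Finset ι) (f : ι → R) :
    ∃ d : R, (∑ i ∈ s, f i) ^ p = (∑ i ∈ s, f i ^ p) + p * d := by
  induction s using Finset.cons_induction with
  | empty => exact ⟨0, by simp [zero_pow hp.ne_zero]⟩
  | cons a s ha ih =>
      obtain ⟨d2, hd2⟩ := ih
      obtain ⟨d1, hd1⟩ := exists_add_pow_prime_eq hp (f a) (∑ i ∈ s, f i)
      refine ⟨f a * (∑ i ∈ s, f i) * d1 + d2, ?_⟩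
      rw [Finset.sum_cons, Finset.sum_cons, hd1, hd2]
      ring

/-- The ring of integers of `K`, as a subring. -/
def OSub (K : Type) [NormedField K] (na : ∀ x y : K, ‖x + y‖ ≤ max ‖x‖ ‖y‖) :
    Subring K where
  carrier := {x | ‖x‖ ≤ 1}
  zero_mem' := by simp
  one_mem' := by simp
  add_mem' := by
    intro a b ha hb
    exact le_trans (na a b) (max_le ha hb)
  neg_mem' := by
    intro a ha
    simpa using ha
  mul_mem' := by
    intro a b ha hb
    have := norm_mul a b
    calc ‖a * b‖ = ‖a‖ * ‖b‖ := norm_mul a b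
      _ ≤ 1 * 1 := mul_le_mul ha hb (norm_nonneg _) zero_le_one
      _ = 1 := mul_one 1

section Aux7
variable {K : Type} [NormedField K] {p : ℕ} [Fact p.Prime]

theorem aux_fermat (c : ℤ) : ∃ e : ℤ, c ^ p = c + p * e := by
  have hp := (Fact.out : p.Prime)
  have hdvd : (p : ℤ) ∣ c ^ p - c := by
    have : ((c ^ p - c : ℤ) : ZMod p) = 0 := by
      push_cast
      rw [ZMod.pow_card]
      ring
    exact_mod_cast (ZMod.intCast_zmod_eq_zero_iff_dvd _ p).mp this
  obtain ⟨e, he⟩ := hdvd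
  exact ⟨e, by linarith⟩

theorem aux_freshman (na : ∀ x y : K, ‖x + y‖ ≤ max ‖x‖ ‖y‖)
    (hKp : ‖(p : K)‖ = (p : ℝ)⁻¹) (r : ℕ → K) (hr0 : r 0 = (p : K))
    (hr : ∀ n, r (n + 1) ^ p = r n) {n : ℕ} {u : K} (hu : u ∈ MSet p r n) :
    ∃ w : K, ‖w‖ ≤ 1 ∧ ‖u - w ^ p‖ ≤ ‖(p : K)‖ := by
  have hp := (Fact.out : p.Prime)
  obtain ⟨c, hc⟩ := hu
  set N := p ^ n with hNdef
  have hbound : ∀ k : ℕ, ‖(c k : K) * r (n + 1) ^ k‖ ≤ 1 := by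
    intro k
    rw [norm_mul, norm_pow]
    calc ‖(c k : K)‖ * ‖r (n + 1)‖ ^ k ≤ 1 * 1 := by
          apply mul_le_mul (aux_int_le_one na _) ?_ (by positivity) zero_le_one
          exact pow_le_one₀ (norm_nonneg _) (aux_theta_le_one hKp r hr0 hr (n + 1))
      _ = 1 := mul_one 1
  set f : ℕ → OSub K na := fun k => ⟨(c k : K) * r (n + 1) ^ k, hbound k⟩ with hf
  obtain ⟨d, hd⟩ := aux_sum_pow_p hp (Finset.range N) f
  set w : K := ∑ k ∈ Finset.range N, (c k : K) * r (n + 1) ^ k with hw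
  have hwle : ‖w‖ ≤ 1 := aux_sum_le na _ _ zero_le_one fun k _ => hbound k
  have hcast := congrArg ((OSub K na).subtype) hd
  simp only [map_pow, map_add, map_mul, map_natCast, map_sum] at hcast
  have hsubf : ∀ k, (OSub K na).subtype (f k) = (c k : K) * r (n + 1) ^ k :=
    fun k => rfl
  have hwp : w ^ p = (∑ k ∈ Finset.range N, ((c k : K) * r (n + 1) ^ k) ^ p)
      + (p : K) * ((OSub K na).subtype d) := by
    rw [hw]
    exact hcast
  have hterm : ∀ k, ((c k : K) * r (n + 1) ^ k) ^ p = ((c k : K)) ^ p * r n ^ k := by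
    intro k
    rw [mul_pow, ← pow_mul, mul_comm k p, pow_mul, hr n]
  choose e he using fun k => aux_fermat (p := p) (c k)
  have hsum2 : (∑ k ∈ Finset.range N, ((c k : K) * r (n + 1) ^ k) ^ p)
      = u + (p : K) * ∑ k ∈ Finset.range N, (e k : K) * r n ^ k := by
    rw [hc, Finset.mul_sum, ← Finset.sum_add_distrib]
    refine Finset.sum_congr rfl fun k _ => ?_
    rw [hterm k]
    have : ((c k : K)) ^ p = (c k : K) + (p : K) * (e k : K) := by
      have := congrArg (fun z : ℤ => (z : K)) (he k)
      push_cast at this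
      simpa using this
    rw [this]
    ring
  set E := ∑ k ∈ Finset.range N, (e k : K) * r n ^ k with hE
  have hEle : ‖E‖ ≤ 1 := by
    refine aux_sum_le na _ _ zero_le_one fun k _ => ?_
    rw [norm_mul, norm_pow]
    calc ‖(e k : K)‖ * ‖r n‖ ^ k ≤ 1 * 1 := by
          apply mul_le_mul (aux_int_le_one na _) ?_ (by positivity) zero_le_one
          exact pow_le_one₀ (norm_nonneg _) (aux_theta_le_one hKp r hr0 hr n)
      _ = 1 := mul_one 1
  refine ⟨w, hwle, ?_⟩
  have hfinal : u - w ^ p = -((p : K) * (E + (OSub K na).subtype d)) := by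
    rw [hwp, hsum2]
    ring
  rw [hfinal, norm_neg, norm_mul]
  have hdle : ‖(OSub K na).subtype d‖ ≤ 1 := d.2
  calc ‖(p : K)‖ * ‖E + (OSub K na).subtype d‖ ≤ ‖(p : K)‖ * 1 := by
        apply mul_le_mul_of_nonneg_left ?_ (norm_nonneg _)
        exact le_trans (na _ _) (max_le hEle hdle)
    _ = ‖(p : K)‖ := mul_one _

end Aux7

/-- The fraction field of the union of the canonical-form sets, as a subfield. -/
def FSub (K : Type) [NormedField K] (p : ℕ) [Fact p.Prime] (r : ℕ → K)
    (hr0 : r 0 = (p : K)) (hr : ∀ n, r (n + 1) ^ p = r n) : Subfield K where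
  carrier := {x | ∃ n a b, a ∈ MSet p r n ∧ b ∈ MSet p r n ∧ b ≠ 0 ∧ x * b = a}
  zero_mem' := ⟨0, 0, 1, MSet.zero_mem r 0, MSet.one_mem r hr0 hr 0, one_ne_zero,
    by ring⟩
  one_mem' := ⟨0, 1, 1, MSet.one_mem r hr0 hr 0, MSet.one_mem r hr0 hr 0,
    one_ne_zero, by ring⟩
  add_mem' := by
    rintro x y ⟨n, a, b, ha, hb, hbne, hx⟩ ⟨m, a', b', ha', hb', hbne', hy⟩
    refine ⟨max n m, a * b' + a' * b, b * b',
      MSet.add_mem r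
        (MSet.mul_mem r hr0 hr (MSet.mono r hr0 hr (le_max_left n m) ha)
          (MSet.mono r hr0 hr (le_max_right n m) hb'))
        (MSet.mul_mem r hr0 hr (MSet.mono r hr0 hr (le_max_right n m) ha')
          (MSet.mono r hr0 hr (le_max_left n m) hb)),
      MSet.mul_mem r hr0 hr (MSet.mono r hr0 hr (le_max_left n m) hb)
        (MSet.mono r hr0 hr (le_max_right n m) hb'),
      mul_ne_zero hbne hbne', by linear_combination b' * hx + b * hy⟩
  neg_mem' := by
    rintro x ⟨n, a, b, ha, hb, hbne, hx⟩
    exact ⟨n, -a, b, MSet.neg_mem r ha, hb, hbne, by linear_combination -hx⟩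
  mul_mem' := by
    rintro x y ⟨n, a, b, ha, hb, hbne, hx⟩ ⟨m, a', b', ha', hb', hbne', hy⟩
    refine ⟨max n m, a * a', b * b',
      MSet.mul_mem r hr0 hr (MSet.mono r hr0 hr (le_max_left n m) ha)
        (MSet.mono r hr0 hr (le_max_right n m) ha'),
      MSet.mul_mem r hr0 hr (MSet.mono r hr0 hr (le_max_left n m) hb)
        (MSet.mono r hr0 hr (le_max_right n m) hb'),
      mul_ne_zero hbne hbne', by linear_combination (y * b') * hx + a * hy⟩
  inv_mem' := by
    rintro x ⟨n, a, b, ha, hb, hbne, hx⟩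
    by_cases hxz : x = 0
    · exact ⟨0, 0, 1, MSet.zero_mem r 0, MSet.one_mem r hr0 hr 0, one_ne_zero,
        by rw [hxz]; simp⟩
    · have hane : a ≠ 0 := by
        intro h
        rw [h] at hx
        exact hxz ((mul_eq_zero.mp hx).resolve_right hbne)
      refine ⟨n, b, a, hb, ha, hane, ?_⟩
      field_simp
      linear_combination -hx

/-- Fix a prime `p`.  Let `K` be the completion of `ℚ_p(p^{1/p^n} : n ≥ 0)` with respect to
the unique extension of the `p`-adic absolute value: i.e. `K` is a complete field equipped
with a multiplicative nonarchimedean absolute value `‖·‖` (inducing its topology) with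
`‖p‖ = p⁻¹`, containing a compatible system `r n = p^{1/pⁿ}` of `p`-power roots of `p` which
together generate a dense subfield.

Then `K` is a perfectoid field:
* the absolute value on `K` is nonarchimedean,
* `K` is complete,
* `p` is topologically nilpotent in `K`, i.e. `‖p‖ < 1`,
* the image `|K^×|` of the absolute value is dense in `ℝ_{>0}`, and
* the `p`-th power map on `O_K/pO_K` is surjective: every `x ∈ O_K = {x : ‖x‖ ≤ 1}` is
  congruent modulo `pO_K = {z : ‖z‖ ≤ ‖p‖}` to a `p`-th power of an element of `O_K`. -/
theorem completionOfQpAdjoinPPowerRootsOfP_isPerfectoid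
    (p : ℕ) [Fact p.Prime]
    (K : Type) [NormedField K] [CompleteSpace K]
    (hK_na : ∀ x y : K, ‖x + y‖ ≤ max ‖x‖ ‖y‖)
    (hKp : ‖(p : K)‖ = (p : ℝ)⁻¹)
    (r : ℕ → K) (hr0 : r 0 = (p : K)) (hr : ∀ n, r (n + 1) ^ p = r n)
    (hKdense : Dense (Subfield.closure (Set.range r) : Set K)) :
    (∀ x y : K, ‖x + y‖ ≤ max ‖x‖ ‖y‖) ∧
    CompleteSpace K ∧
    ‖(p : K)‖ < 1 ∧
    (∀ c : ℝ, 0 < c → c ∈ closure (Set.range fun x : Kˣ => ‖(x : K)‖)) ∧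
    (∀ x : K, ‖x‖ ≤ 1 → ∃ y : K, ‖y‖ ≤ 1 ∧ ‖x - y ^ p‖ ≤ ‖(p : K)‖) := by
  have hp := (Fact.out : p.Prime)
  have hp1 : (1 : ℝ) < p := by exact_mod_cast hp.one_lt
  have hppos : (0 : ℝ) < ‖(p : K)‖ := by rw [hKp]; exact aux_q_pos (p := p)
  have hplt1 : ‖(p : K)‖ < 1 := by rw [hKp]; exact aux_q_lt_one (p := p)
  refine ⟨hK_na, inferInstance, hplt1, ?_, ?_⟩
  · -- density of the norms of units
    intro cc hcc
    refine Metric.mem_closure_iff.mpr fun ε hε => ?_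
    obtain ⟨n, hn⟩ := pow_unbounded_of_one_lt (cc * ((p : ℝ) - 1) / ε) hp1
    have hθpos := aux_theta_pos hKp r hr0 hr n
    have hθlt := aux_theta_lt_one hKp r hr0 hr n
    have hy1 : 1 < ‖r n‖⁻¹ := (one_lt_inv₀ hθpos).mpr hθlt
    have hy0 : (0 : ℝ) < ‖r n‖⁻¹ := lt_trans zero_lt_one hy1
    obtain ⟨m, hm1, hm2⟩ := exists_mem_Ico_zpow hcc hy1
    have hrne := aux_r_ne hKp r hr0 hr n
    refine ⟨‖(((Units.mk0 (r n) hrne) ^ (-m) : Kˣ) : K)‖,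
      ⟨(Units.mk0 (r n) hrne) ^ (-m), rfl⟩, ?_⟩
    have hunorm : ‖(((Units.mk0 (r n) hrne) ^ (-m) : Kˣ) : K)‖ = (‖r n‖⁻¹) ^ m := by
      rw [Units.val_zpow_eq_zpow_val, Units.val_mk0, norm_zpow, zpow_neg, ← inv_zpow]
    rw [Real.dist_eq, hunorm]
    have hNpos : (0 : ℝ) < (p : ℝ) ^ n := by positivity
    have hyle : ‖r n‖⁻¹ ≤ 1 + ((p : ℝ) - 1) / (p : ℝ) ^ n := by
      have hyN : (‖r n‖⁻¹) ^ (p ^ n : ℕ) = (p : ℝ) := by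
        rw [inv_pow, aux_theta_pow hKp r hr0 hr n, inv_inv]
      have ha0 : (0 : ℝ) ≤ ((p : ℝ) - 1) / (p : ℝ) ^ n :=
        div_nonneg (by linarith) hNpos.le
      have hB : (p : ℝ) ≤ (1 + ((p : ℝ) - 1) / (p : ℝ) ^ n) ^ (p ^ n : ℕ) := by
        have hber := one_add_mul_le_pow
          (a := ((p : ℝ) - 1) / (p : ℝ) ^ n) (by linarith) (p ^ n)
        have hcastpn : ((p ^ n : ℕ) : ℝ) = (p : ℝ) ^ n := by push_cast; ring
        rw [hcastpn] at hber
        calc (p : ℝ) = 1 + ((p : ℝ) ^ n) * (((p : ℝ) - 1) / (p : ℝ) ^ n) := by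
              field_simp; ring
          _ ≤ (1 + ((p : ℝ) - 1) / (p : ℝ) ^ n) ^ (p ^ n : ℕ) := hber
      refine le_of_pow_le_pow_left₀ (pow_pos hp.pos n).ne' (by linarith) ?_
      rw [hyN]; exact hB
    set y := ‖r n‖⁻¹ with hydef
    have hdistlt : cc - y ^ m < ε := by
      have h1 : cc - y ^ m < y ^ (m + 1) - y ^ m := by linarith [hm2]
      have h2 : y ^ (m + 1) - y ^ m = y ^ m * (y - 1) := by
        rw [zpow_add_one₀ (ne_of_gt hy0)]; ring
      have h3 : y ^ m * (y - 1) ≤ cc * (y - 1) :=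
        mul_le_mul_of_nonneg_right hm1 (by linarith)
      have h4 : cc * (y - 1) ≤ cc * (((p : ℝ) - 1) / (p : ℝ) ^ n) :=
        mul_le_mul_of_nonneg_left (by linarith [hyle]) hcc.le
      have h6 : cc * ((p : ℝ) - 1) < ε * (p : ℝ) ^ n := by
        have := (div_lt_iff₀ hε).mp hn
        linarith
      have h5 : cc * (((p : ℝ) - 1) / (p : ℝ) ^ n) < ε := by
        have h7 : cc * (((p : ℝ) - 1) / (p : ℝ) ^ n) = cc * ((p : ℝ) - 1) / (p : ℝ) ^ n := by
          ring
        rw [h7]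
        exact (div_lt_iff₀ hNpos).mpr (by linarith)
      linarith
    have habs : |cc - y ^ m| = cc - y ^ m := abs_of_nonneg (by linarith [hm1])
    rw [habs]
    exact hdistlt
  · -- surjectivity of the p-th power map mod p
    intro x hx
    obtain ⟨y, hyFcl, hxy⟩ := Metric.mem_closure_iff.mp (hKdense x) ‖(p : K)‖ hppos
    rw [dist_eq_norm] at hxy
    have hymem : y ∈ FSub K p r hr0 hr := by
      have hle : Subfield.closure (Set.range r) ≤ FSub K p r hr0 hr := by
        apply Subfield.closure_le.mpr
        rintro - ⟨m, rfl⟩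
        exact ⟨m, r m, 1, by simpa using MSet.monomial_mem r hr0 hr m 1 1,
          MSet.one_mem r hr0 hr m, one_ne_zero, by ring⟩
      exact hle hyFcl
    obtain ⟨n, a, b, ha, hb, hbne, hyb⟩ := hymem
    have hynorm : ‖y‖ ≤ 1 := by
      calc ‖y‖ = ‖x + (y - x)‖ := by congr 1; ring
        _ ≤ max ‖x‖ ‖y - x‖ := hK_na _ _
        _ ≤ 1 := max_le hx (by
            rw [norm_sub_rev]
            exact le_trans hxy.le hplt1.le)
    by_cases haz : a = 0
    · have hyz : y = 0 := by
        have h0 : y * b = 0 := by rw [hyb, haz]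
        exact (mul_eq_zero.mp h0).resolve_right hbne
      refine ⟨0, by simp, ?_⟩
      rw [zero_pow hp.ne_zero, sub_zero]
      calc ‖x‖ = ‖x - y‖ := by rw [hyz, sub_zero]
        _ ≤ ‖(p : K)‖ := hxy.le
    · obtain ⟨cb, hcb⟩ := hb
      obtain ⟨ca, hca⟩ := ha
      have hbexists : ∃ k ∈ Finset.range (p ^ n), cb k ≠ 0 := by
        by_contra hall
        push_neg at hall
        apply hbne
        rw [hcb]
        exact Finset.sum_eq_zero fun k hk => by rw [hall k hk]; simp
      obtain ⟨k0, hk0r, hck0, hbnorm, hbbound⟩ :=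
        aux_dominant hK_na hKp r hr0 hr cb hbexists
      set v0 := padicValInt p (cb k0) with hv0
      have hmu : ‖(cb k0 : K) * r n ^ k0‖ = ((p : ℝ)⁻¹) ^ v0 * ‖r n‖ ^ k0 := by
        rw [norm_mul, aux_int_norm hK_na hKp hck0, norm_pow]
      have hbnorm' : ‖b‖ = ((p : ℝ)⁻¹) ^ v0 * ‖r n‖ ^ k0 := by
        rw [hcb, hbnorm, hmu]
      have hanorm : ‖a‖ ≤ ‖b‖ := by
        rw [← hyb, norm_mul]
        calc ‖y‖ * ‖b‖ ≤ 1 * ‖b‖ :=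
              mul_le_mul_of_nonneg_right hynorm (norm_nonneg _)
          _ = ‖b‖ := one_mul _
      have haexists : ∃ k ∈ Finset.range (p ^ n), ca k ≠ 0 := by
        by_contra hall
        push_neg at hall
        apply haz
        rw [hca]
        exact Finset.sum_eq_zero fun k hk => by rw [hall k hk]; simp
      obtain ⟨k1, hk1r, hck1, hanorm2, habound⟩ :=
        aux_dominant hK_na hKp r hr0 hr ca haexists
      have hboundb : ∀ k ∈ Finset.range (p ^ n),
          ‖(cb k : K) * r n ^ k‖ ≤ ((p : ℝ)⁻¹) ^ v0 * ‖r n‖ ^ k0 := fun k hk => by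
        rw [← hmu]; exact hbbound k hk
      have hbounda : ∀ k ∈ Finset.range (p ^ n),
          ‖(ca k : K) * r n ^ k‖ ≤ ((p : ℝ)⁻¹) ^ v0 * ‖r n‖ ^ k0 := by
        intro k hk
        calc ‖(ca k : K) * r n ^ k‖ ≤ ‖(ca k1 : K) * r n ^ k1‖ := habound k hk
          _ = ‖a‖ := by rw [hca]; exact hanorm2.symm
          _ ≤ ‖b‖ := hanorm
          _ = _ := hbnorm'
      obtain ⟨H, hHmem, hHfac⟩ :=
        aux_extract hK_na hKp r hr0 hr (Finset.mem_range.mp hk0r) cb hboundb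
      obtain ⟨F, hFmem, hFfac⟩ :=
        aux_extract hK_na hKp r hr0 hr (Finset.mem_range.mp hk0r) ca hbounda
      set π := (p : K) ^ v0 * r n ^ k0 with hπdef
      have hπnorm : ‖π‖ = ((p : ℝ)⁻¹) ^ v0 * ‖r n‖ ^ k0 := by
        rw [hπdef, norm_mul, norm_pow, norm_pow, hKp]
      have hπne : π ≠ 0 := mul_ne_zero (pow_ne_zero _ (aux_p_ne hKp))
        (pow_ne_zero _ (aux_r_ne hKp r hr0 hr n))
      have hbfac : b = π * H := by rw [hcb]; exact hHfac
      have hafac : a = π * F := by rw [hca]; exact hFfac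
      have hvne : ((p : ℝ)⁻¹) ^ v0 * ‖r n‖ ^ k0 ≠ 0 := by
        have hθpos := aux_theta_pos hKp r hr0 hr n
        positivity
      have hHnorm : ‖H‖ = 1 := by
        have h1 : ‖b‖ = ‖π‖ * ‖H‖ := by rw [hbfac, norm_mul]
        rw [hbnorm', hπnorm] at h1
        exact (mul_left_cancel₀ hvne (by rw [mul_one, ← h1])).symm
      have hHne : H ≠ 0 := by
        intro h; rw [h, norm_zero] at hHnorm; norm_num at hHnorm
      have hyeq : y = F * H⁻¹ := by
        have h2 : y * (π * H) = π * F := by rw [← hbfac, hyb, hafac]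
        have h3 : y * H = F :=
          mul_left_cancel₀ hπne (by linear_combination h2)
        rw [← h3]
        field_simp
      have hyA : y ∈ (USubring p r hr0 hr).topologicalClosure := by
        rw [hyeq]
        exact Subring.mul_mem _
          ((USubring p r hr0 hr).le_topologicalClosure (Set.mem_iUnion.mpr ⟨n, hFmem⟩))
          (aux_unit_inv hK_na hKp r hr0 hr hHmem hHnorm)
      have hyC : y ∈ closure ((USubring p r hr0 hr : Set K)) := hyA
      obtain ⟨u', hu'mem, hyu'⟩ := Metric.mem_closure_iff.mp hyC ‖(p : K)‖ hppos
      rw [dist_eq_norm] at hyu'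
      obtain ⟨m', hm'⟩ := Set.mem_iUnion.mp hu'mem
      obtain ⟨w, hwle, hww⟩ := aux_freshman hK_na hKp r hr0 hr hm'
      refine ⟨w, hwle, ?_⟩
      have hsplit : x - w ^ p = (x - y) + ((y - u') + (u' - w ^ p)) := by ring
      rw [hsplit]
      exact le_trans (hK_na _ _) (max_le hxy.le
        (le_trans (hK_na _ _) (max_le hyu'.le hww)))
end

section
/- Let O be a commutative ring that is p-adically complete and separated, i.e. the canonical map O → lim_n O/p^nO is an isomorphism. Then the projection O → O/pO induces a bijection of multiplicative monoids lim_{x↦x^p} O → lim_{x↦x^p} O/pO, where each inverse limit is taken over the system of copies of the multiplicative monoid indexed by ℕ with all transition maps given by x ↦ x^p. -/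
section aux

variable {O : Type} [CommRing O] {p : ℕ}

lemma powLimit_smod_iff_dvd (p : ℕ) (n : ℕ) (x y : O) :
    x ≡ y [SMOD (Ideal.span {((p : ℕ) : O)} ^ n • ⊤ : Submodule O O)] ↔
      ((p : ℕ) : O) ^ n ∣ x - y := by
  rw [SModEq.sub_mem, smul_eq_mul, Ideal.mul_top, Ideal.span_singleton_pow,
    Ideal.mem_span_singleton]

lemma powLimit_coord {M : Type} [CommMonoid M] {p : ℕ} {f : ℕ → M}
    (hf : ∀ n, f (n + 1) ^ p = f n) (n m : ℕ) : f (n + m) ^ p ^ m = f n := by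
  induction m with
  | zero => simp
  | succ m ih =>
    have e : n + (m + 1) = (n + m) + 1 := rfl
    rw [e, pow_succ', pow_mul, hf (n + m), ih]

end aux

/-- The inverse limit `lim_{x ↦ x^p} M` of a commutative monoid `M` along the `p`-th power
maps: the multiplicative monoid of sequences `(x₀, x₁, x₂, …)` in `M` with
`x_{n+1} ^ p = x_n` for all `n`, under componentwise multiplication. -/
def powLimitMonoid (M : Type) [CommMonoid M] (p : ℕ) : Submonoid (ℕ → M) where
  carrier := {f : ℕ → M | ∀ n, f (n + 1) ^ p = f n}
  one_mem' := fun n => by simp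
  mul_mem' := by
    intro f g hf hg n
    simp only [Pi.mul_apply, mul_pow, hf n, hg n]

/-- The monoid homomorphism `lim_{x ↦ x^p} O → lim_{x ↦ x^p} O/pO` induced componentwise by
the projection `O → O/pO`. -/
def powLimitProjection (O : Type) [CommRing O] (p : ℕ) :
    powLimitMonoid O p →* powLimitMonoid (O ⧸ Ideal.span {((p : ℕ) : O)}) p where
  toFun f :=
    ⟨fun n => Ideal.Quotient.mk (Ideal.span {((p : ℕ) : O)}) (f.1 n),
      fun n => by rw [← map_pow, f.2 n]⟩
  map_one' := Subtype.ext (funext fun n => map_one _)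
  map_mul' f g := Subtype.ext (funext fun n => map_mul _ _ _)

/-- Fix a prime `p`.  Let `O` be a commutative ring that is `p`-adically complete and
separated (the canonical map `O → lim_n O/pⁿO` is an isomorphism, encoded here by
`IsAdicComplete`).  Then the projection `O → O/pO` induces a bijection of multiplicative
monoids `lim_{x ↦ x^p} O → lim_{x ↦ x^p} O/pO`. -/
theorem powLimitProjection_bijective
    (p : ℕ) [Fact p.Prime]
    (O : Type) [CommRing O]
    (hcomplete : IsAdicComplete (Ideal.span {((p : ℕ) : O)}) O) :
    Function.Bijective (powLimitProjection O p) := by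
  haveI := hcomplete
  set I : Ideal O := Ideal.span {((p : ℕ) : O)} with hI
  have haus : ∀ x : O, (∀ m : ℕ, ((p : ℕ) : O) ^ m ∣ x) → x = 0 := by
    intro x hx
    refine IsHausdorff.haus (I := I) inferInstance x fun m => ?_
    rw [hI, powLimit_smod_iff_dvd, sub_zero]
    exact hx m
  have mk_eq_iff : ∀ x y : O,
      Ideal.Quotient.mk I x = Ideal.Quotient.mk I y ↔ ((p : ℕ) : O) ∣ x - y := by
    intro x y
    rw [Ideal.Quotient.eq, hI, Ideal.mem_span_singleton]
  constructor
  · -- injectivity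
    rintro ⟨f, hf⟩ ⟨g, hg⟩ hfg
    have key : ∀ n, Ideal.Quotient.mk I (f n) = Ideal.Quotient.mk I (g n) :=
      fun n => congrFun (congrArg Subtype.val hfg) n
    ext n
    have hzero : f n - g n = 0 := by
      refine haus _ fun m => ?_
      have h1 : ((p : ℕ) : O) ∣ f (n + m) - g (n + m) := (mk_eq_iff _ _).1 (key (n + m))
      have h2 := dvd_sub_pow_of_dvd_sub h1 m
      rw [powLimit_coord hf, powLimit_coord hg] at h2
      exact dvd_trans (pow_dvd_pow _ (Nat.le_succ m)) h2
    have := sub_eq_zero.mp hzero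
    simpa using this
  · -- surjectivity
    rintro ⟨g, hg⟩
    choose y hy using fun n => Ideal.Quotient.mk_surjective (I := I) (g n)
    have hstep : ∀ n, ((p : ℕ) : O) ∣ y (n + 1) ^ p - y n := by
      intro n
      rw [← mk_eq_iff, map_pow, hy, hy, hg]
    set s : ℕ → ℕ → O := fun n m => y (n + m) ^ p ^ m with hs
    have hsucc : ∀ n m, ((p : ℕ) : O) ^ (m + 1) ∣ s n (m + 1) - s n m := by
      intro n m
      have h := dvd_sub_pow_of_dvd_sub (hstep (n + m)) m
      have e1 : (y (n + m + 1) ^ p) ^ p ^ m = s n (m + 1) := by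
        have e : n + (m + 1) = (n + m) + 1 := rfl
        simp only [hs, e, pow_succ', pow_mul]
      rw [e1] at h
      exact h
    have hchain : ∀ n m m', m ≤ m' → ((p : ℕ) : O) ^ m ∣ s n m - s n m' := by
      intro n m m' hmm'
      induction m', hmm' using Nat.le_induction with
      | base => simp
      | succ m' hm ih =>
        have h2 : ((p : ℕ) : O) ^ m ∣ s n (m' + 1) - s n m' :=
          dvd_trans (pow_dvd_pow _ (Nat.le_succ_of_le hm)) (hsucc n m')
        have : s n m - s n (m' + 1) = (s n m - s n m') - (s n (m' + 1) - s n m') := by ring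
        rw [this]
        exact dvd_sub ih h2
    have hlim : ∀ n, ∃ L : O, ∀ m, ((p : ℕ) : O) ^ m ∣ s n m - L := by
      intro n
      obtain ⟨L, hL⟩ := IsPrecomplete.prec (I := I) inferInstance (f := fun m => s n m)
        (fun {m m'} hmm' => by
          rw [hI, powLimit_smod_iff_dvd]
          exact hchain n m m' hmm')
      exact ⟨L, fun m => (powLimit_smod_iff_dvd p m _ _).1 (hL m)⟩
    choose x hx using hlim
    have hcompat : ∀ n, x (n + 1) ^ p = x n := by
      intro n
      have hz : x (n + 1) ^ p - x n = 0 := by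
        refine haus _ fun m => ?_
        -- x (n+1) ≡ s (n+1) m mod p^m, so x(n+1)^p ≡ (s (n+1) m)^p = s n (m+1) mod p^m
        have h1 : ((p : ℕ) : O) ^ m ∣ x (n + 1) ^ p - s (n + 1) m ^ p := by
          have hd : ((p : ℕ) : O) ^ m ∣ x (n + 1) - s (n + 1) m :=
            (dvd_sub_comm).mp (hx (n + 1) m)
          exact hd.trans (sub_dvd_pow_sub_pow _ _ p)
        have e2 : s (n + 1) m ^ p = s n (m + 1) := by
          show (y (n + 1 + m) ^ p ^ m) ^ p = y (n + (m + 1)) ^ p ^ (m + 1)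
          rw [← pow_mul, ← pow_succ, show n + 1 + m = n + (m + 1) by omega]
        have h1' : ((p : ℕ) : O) ^ m ∣ x (n + 1) ^ p - s n (m + 1) := e2 ▸ h1
        have h3 : ((p : ℕ) : O) ^ m ∣ s n (m + 1) - x n :=
          dvd_trans (pow_dvd_pow _ (Nat.le_succ m)) (hx n (m + 1))
        have e3 : x (n + 1) ^ p - x n =
            (x (n + 1) ^ p - s n (m + 1)) + (s n (m + 1) - x n) := by ring
        rw [e3]
        exact dvd_add h1' h3
      exact sub_eq_zero.mp hz
    have hmk : ∀ n, Ideal.Quotient.mk I (x n) = g n := by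
      intro n
      have h1 : ((p : ℕ) : O) ∣ s n 1 - x n := by
        have := hx n 1
        simpa using this
      have h2 : ((p : ℕ) : O) ∣ s n 1 - y n := by
        have := hstep n
        simpa [hs] using this
      have h3 : ((p : ℕ) : O) ∣ x n - y n := by
        have e : x n - y n = (s n 1 - y n) - (s n 1 - x n) := by ring
        rw [e]; exact dvd_sub h2 h1
      rw [← hy n, mk_eq_iff]
      exact h3
    exact ⟨⟨x, hcompat⟩, Subtype.ext (funext fun n => hmk n)⟩
end
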